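/- Assume 𝓜_N and all 𝓜_{N,(b,0)} (1 ≤ b ≤ q), 𝓜_{N,(0,a)} (1 ≤ a ≤ p) admit Gauss–Borel factorizations with lower unitriangular factors. Writing L_{a,n} := (L_a)_{n,n−1} and U_{b,n} := (U_b)_{n,n}, the following alternative expressions hold: for a ∈ {1,…,p} and n ∈ {1,…,N−1}, L_{a,n} = (𝓤_{N,(0,a)})_{n−1,n−1} / (𝓤_{N,(0,a−1)})_{n,n}; and for b ∈ {1,…,q}, U_{b,0} = −(𝓛_{N,(b−1,0)})_{1,0}, while for n ∈ {1,…,N−2}, U_{b,n} = (𝓛_{N,(b,0)})_{n,n−1} − (𝓛_{N,(b−1,0)})_{n+1,n}. -/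

import Mathlib

open Matrix MeasureTheory

noncomputable section

/-- Monomial matrix `X^{[M]}_{[r]}(x)`. -/
def Xmat (r M : ℕ) (x : ℝ) : Matrix (Fin M) (Fin r) ℝ :=
  Matrix.of fun i s => if (i : ℕ) % r = (s : ℕ) then x ^ ((i : ℕ) / r) else 0

/-- The matrix `𝔛_{[r,s]}(x)`. -/
def frakX (r s : ℕ) (x : ℝ) : Matrix (Fin r) (Fin r) ℝ :=
  Matrix.of fun i j =>
    if (i : ℕ) < r - s ∧ (j : ℕ) = (i : ℕ) + s then 1
    else if r - s ≤ (i : ℕ) ∧ (i : ℕ) = (j : ℕ) + (r - s) then x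
    else 0

/-- Christoffel-perturbed moment matrix `𝓜_{N,(n,m)}`. -/
def MomC (q p : ℕ) (μ : Fin q → Fin p → Measure ℝ)
    (N n m : ℕ) : Matrix (Fin N) (Fin N) ℝ :=
  Matrix.of fun i j =>
    ∑ a : Fin q, ∑ b : Fin p,
      ∫ x : ℝ, (Xmat q N x * frakX q 1 x ^ n) i a *
        (Xmat p N x * frakX p 1 x ^ m) j b ∂ μ a b

set_option linter.unusedVariables false

lemma mod_div_succ (r m : ℕ) (hr : 0 < r) :
    (m % r + 1 < r → (m+1) % r = m % r + 1 ∧ (m+1) / r = m / r) ∧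
    (m % r + 1 = r → (m+1) % r = 0 ∧ (m+1) / r = m / r + 1) := by
  have h0 : r * (m / r) + m % r = m := Nat.div_add_mod m r
  constructor
  · intro h
    constructor
    · conv_lhs => rw [← h0]
      rw [Nat.add_assoc, Nat.mul_add_mod]
      exact Nat.mod_eq_of_lt h
    · conv_lhs => rw [← h0]
      rw [Nat.add_assoc, Nat.mul_add_div hr, Nat.div_eq_of_lt h, Nat.add_zero]
  · intro h
    have hm : m + 1 = r * (m / r + 1) := by rw [Nat.mul_succ]; omega
    constructor
    · rw [hm, Nat.mul_mod_right]
    · rw [hm, Nat.mul_div_cancel_left _ hr]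


lemma xmul_step (r M : ℕ) (hr : 0 < r) (x : ℝ) (n : ℕ) (i : Fin M) (a : Fin r) :
    (Xmat r M x * frakX r 1 x ^ n) i a =
      if ((i:ℕ) + n) % r = (a:ℕ) then x ^ (((i:ℕ)+n)/r) else 0 := by
  induction n generalizing a with
  | zero => simp [Xmat, pow_zero, Matrix.mul_one]
  | succ n ih =>
    rw [pow_succ, ← Matrix.mul_assoc, Matrix.mul_apply]
    set s₀ : Fin r := ⟨((i:ℕ)+n) % r, Nat.mod_lt _ hr⟩ with hs₀
    rw [Fintype.sum_eq_single s₀ (fun s hs => by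
      rw [ih]
      have : ¬ ((i:ℕ)+n) % r = (s:ℕ) := fun hc => hs (Fin.ext hc.symm)
      rw [if_neg this, zero_mul])]
    rw [ih, if_pos rfl]
    have hsv : (s₀ : ℕ) = ((i:ℕ)+n) % r := rfl
    have hlt : ((i:ℕ)+n) % r < r := Nat.mod_lt _ hr
    have hin : (i:ℕ) + (n+1) = ((i:ℕ)+n) + 1 := by omega
    rw [hin]
    rcases lt_or_eq_of_le (Nat.succ_le_of_lt hlt) with hc | hc
    · obtain ⟨hm, hd⟩ := (mod_div_succ r ((i:ℕ)+n) hr).1 hc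
      rw [hm, hd]
      simp only [frakX, Matrix.of_apply, hsv]
      split_ifs <;> first | omega | rw [mul_one] | rw [mul_zero]
    · obtain ⟨hm, hd⟩ := (mod_div_succ r ((i:ℕ)+n) hr).2 hc
      rw [hm, hd]
      simp only [frakX, Matrix.of_apply, hsv]
      split_ifs <;> first | omega | rw [pow_succ] | rw [mul_zero]

lemma momC_row_shift (q p : ℕ) (hq : 0 < q) (μ : Fin q → Fin p → Measure ℝ)
    (N n m : ℕ) (i j : Fin N) (hi : (i:ℕ)+1 < N) :
    MomC q p μ N (n+1) m i j = MomC q p μ N n m ⟨(i:ℕ)+1, hi⟩ j := by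
  unfold MomC
  simp only [Matrix.of_apply]
  refine Finset.sum_congr rfl fun a _ => Finset.sum_congr rfl fun b _ => ?_
  refine congrArg _ (funext fun x => ?_)
  congr 1
  rw [xmul_step q N hq, xmul_step q N hq]
  have h : (i:ℕ) + (n+1) = ((⟨(i:ℕ)+1, hi⟩ : Fin N) : ℕ) + n := by simp; omega
  rw [h]

lemma momC_col_shift (q p : ℕ) (hp : 0 < p) (μ : Fin q → Fin p → Measure ℝ)
    (N n m : ℕ) (i j : Fin N) (hj : (j:ℕ)+1 < N) :
    MomC q p μ N n (m+1) i j = MomC q p μ N n m i ⟨(j:ℕ)+1, hj⟩ := by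
  unfold MomC
  simp only [Matrix.of_apply]
  refine Finset.sum_congr rfl fun a _ => Finset.sum_congr rfl fun b _ => ?_
  refine congrArg _ (funext fun x => ?_)
  congr 1
  rw [xmul_step p N hp, xmul_step p N hp]
  have h : (j:ℕ) + (m+1) = ((⟨(j:ℕ)+1, hj⟩ : Fin N) : ℕ) + m := by simp; omega
  rw [h]

-- sum over two indices
lemma sumTwo {N : ℕ} (f : Fin N → ℝ) (i j : Fin N) (hij : i ≠ j)
    (h : ∀ k, k ≠ i → k ≠ j → f k = 0) : ∑ k, f k = f i + f j := by
  rw [← Finset.sum_pair hij]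
  refine (Finset.sum_subset (Finset.subset_univ _) fun k _ hk => ?_).symm
  simp only [Finset.mem_insert, Finset.mem_singleton, not_or] at hk
  exact h k hk.1 hk.2

-- upper triangular inverse facts
lemma upperInv {N : ℕ} (A : Matrix (Fin N) (Fin N) ℝ)
    (hA : ∀ i j : Fin N, j < i → A i j = 0) (hdet : IsUnit A.det) :
    (∀ i j : Fin N, j < i → A⁻¹ i j = 0) ∧ (∀ i : Fin N, A⁻¹ i i = 1 / A i i) := by
  have : Invertible A := A.invertibleOfIsUnitDet hdet
  have hbt : A.BlockTriangular id := fun i j h => hA i j h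
  have hinv := Matrix.blockTriangular_inv_of_blockTriangular hbt
  have htri : ∀ i j : Fin N, j < i → A⁻¹ i j = 0 := fun i j h => hinv h
  refine ⟨htri, fun i => ?_⟩
  have h1 : (A * A⁻¹) i i = 1 := by
    rw [Matrix.mul_nonsing_inv _ hdet]; simp
  rw [Matrix.mul_apply] at h1
  rw [Fintype.sum_eq_single i (fun k hk => ?_)] at h1
  · exact eq_one_div_of_mul_eq_one_left ((mul_comm _ _).trans h1)
  · rcases lt_or_gt_of_ne (Fin.val_ne_of_ne hk) with h | h
    · rw [hA i k (Fin.lt_def.mpr h), zero_mul]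
    · rw [htri k i (Fin.lt_def.mpr h), mul_zero]

-- lower unitriangular inverse facts
lemma lowerInv {N : ℕ} (A : Matrix (Fin N) (Fin N) ℝ)
    (hA : ∀ i j : Fin N, i < j → A i j = 0) (hd : ∀ i : Fin N, A i i = 1) :
    IsUnit A.det ∧ (∀ i j : Fin N, i < j → A⁻¹ i j = 0) ∧ (∀ i : Fin N, A⁻¹ i i = 1) ∧
    (∀ (k : ℕ) (hk : k + 1 < N),
      A⁻¹ ⟨k+1, hk⟩ ⟨k, by omega⟩ = - A ⟨k+1, hk⟩ ⟨k, by omega⟩) := by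
  have hbt : A.BlockTriangular (OrderDual.toDual : Fin N → (Fin N)ᵒᵈ) :=
    fun i j h => hA i j h
  have hdet : IsUnit A.det := by
    rw [Matrix.det_of_lowerTriangular A hbt]
    simp [hd]
  have : Invertible A := A.invertibleOfIsUnitDet hdet
  have hinv := Matrix.blockTriangular_inv_of_blockTriangular hbt
  have htri : ∀ i j : Fin N, i < j → A⁻¹ i j = 0 := fun i j h => hinv h
  have hdiag : ∀ i : Fin N, A⁻¹ i i = 1 := by
    intro i
    have h1 : (A * A⁻¹) i i = 1 := by
      rw [Matrix.mul_nonsing_inv _ hdet]; simp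
    rw [Matrix.mul_apply] at h1
    rw [Fintype.sum_eq_single i (fun k hk => ?_)] at h1
    · rw [hd i, one_mul] at h1; exact h1
    · rcases lt_or_gt_of_ne (Fin.val_ne_of_ne hk) with h | h
      · rw [htri k i (Fin.lt_def.mpr h), mul_zero]
      · rw [hA i k (Fin.lt_def.mpr h), zero_mul]
  refine ⟨hdet, htri, hdiag, fun k hk => ?_⟩
  set i' : Fin N := ⟨k+1, hk⟩ with hi'
  set j' : Fin N := ⟨k, by omega⟩ with hj'
  have h0 : (A * A⁻¹) i' j' = 0 := by
    rw [Matrix.mul_nonsing_inv _ hdet]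
    simp only [Matrix.one_apply, hi', hj']
    rw [if_neg (show ¬ i' = j' by simp [Fin.ext_iff, hi', hj'])]
  rw [Matrix.mul_apply] at h0
  rw [sumTwo _ j' i' (by simp [hi', hj']) (fun s hs1 hs2 => ?_)] at h0
  · rw [hdiag j', hd i', mul_one, one_mul] at h0
    linarith
  · rcases lt_trichotomy (s:ℕ) k with h | h | h
    · rw [htri s j' (Fin.lt_def.mpr h), mul_zero]
    · exact absurd (Fin.ext h) hs1
    · rcases lt_or_eq_of_le (Nat.succ_le_of_lt h) with h2 | h2
      · rw [hA i' s (Fin.lt_def.mpr h2), zero_mul]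
      · exact absurd (Fin.ext h2.symm) hs2

/-- Entries of the bidiagonal factors, alternative form:
`L_{a,n} = (𝓤_{N,(0,a)})_{n−1,n−1} / (𝓤_{N,(0,a−1)})_{n,n}`,
`U_{b,0} = −(𝓛_{N,(b−1,0)})_{1,0}`, and for `1 ≤ n ≤ N−2`,
`U_{b,n} = (𝓛_{N,(b,0)})_{n,n−1} − (𝓛_{N,(b−1,0)})_{n+1,n}`. -/
theorem bidiagonal_entries_alternative_form (p q N : ℕ) (hp : 0 < p) (hq : 0 < q)
    (μ : Fin q → Fin p → Measure ℝ)
    (hμ : ∀ (a : Fin q) (b : Fin p) (k : ℕ),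
      Integrable (fun x : ℝ => |x| ^ k) (μ a b))
    (L U : ℕ → ℕ → Matrix (Fin N) (Fin N) ℝ)
    (hfact : ∀ n m : ℕ, (n ≤ q ∧ m = 0) ∨ (n = 0 ∧ m ≤ p) →
      (∀ i j : Fin N, i < j → L n m i j = 0) ∧
      (∀ i : Fin N, L n m i i = 1) ∧
      (∀ i j : Fin N, j < i → U n m i j = 0) ∧
      IsUnit (U n m).det ∧
      MomC q p μ N n m = (L n m)⁻¹ * (U n m)⁻¹) :
    (∀ a : ℕ, 1 ≤ a → a ≤ p → ∀ n : ℕ, 1 ≤ n → (hn : n < N) →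
      (L 0 (a - 1) * (L 0 a)⁻¹) ⟨n, hn⟩ ⟨n - 1, by omega⟩ =
        U 0 a ⟨n - 1, by omega⟩ ⟨n - 1, by omega⟩ /
          U 0 (a - 1) ⟨n, hn⟩ ⟨n, hn⟩) ∧
    (∀ b : ℕ, 1 ≤ b → b ≤ q →
      (∀ hN : 1 < N,
        ((U b 0)⁻¹ * U (b - 1) 0) ⟨0, by omega⟩ ⟨0, by omega⟩ =
          - L (b - 1) 0 ⟨1, hN⟩ ⟨0, by omega⟩) ∧
      (∀ (n : ℕ) (hn1 : 1 ≤ n) (hn2 : n + 2 ≤ N),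
        ((U b 0)⁻¹ * U (b - 1) 0) ⟨n, by omega⟩ ⟨n, by omega⟩ =
          L b 0 ⟨n, by omega⟩ ⟨n - 1, by omega⟩ -
            L (b - 1) 0 ⟨n + 1, by omega⟩ ⟨n, by omega⟩)) := by
  constructor
  · -- L part
    intro a ha1 ha2 n hn1 hn
    obtain ⟨hLa_tri, hLa_d, hUa_tri, hUa_det, hMa⟩ := hfact 0 a (Or.inr ⟨rfl, ha2⟩)
    obtain ⟨hLa'_tri, hLa'_d, hUa'_tri, hUa'_det, hMa'⟩ :=
      hfact 0 (a-1) (Or.inr ⟨rfl, by omega⟩)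
    obtain ⟨hLa_det, -, -, -⟩ := lowerInv _ hLa_tri hLa_d
    obtain ⟨hLa'_det, -, -, -⟩ := lowerInv _ hLa'_tri hLa'_d
    obtain ⟨hUa'_inv_tri, hUa'_inv_diag⟩ := upperInv _ hUa'_tri hUa'_det
    have key1 : L 0 (a-1) * (L 0 a)⁻¹ = (L 0 (a-1) * MomC q p μ N 0 a) * U 0 a := by
      rw [hMa, Matrix.mul_assoc, Matrix.mul_assoc, Matrix.nonsing_inv_mul _ hUa_det,
        Matrix.mul_one]
    have key2 : ∀ (i j : Fin N) (hj : (j:ℕ) + 1 < N),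
        (L 0 (a-1) * MomC q p μ N 0 a) i j = (U 0 (a-1))⁻¹ i ⟨(j:ℕ)+1, hj⟩ := by
      intro i j hj
      have ha' : a - 1 + 1 = a := by omega
      have hshift : ∀ k : Fin N,
          MomC q p μ N 0 a k j = MomC q p μ N 0 (a-1) k ⟨(j:ℕ)+1, hj⟩ := by
        intro k
        conv_lhs => rw [← ha']
        exact momC_col_shift q p hp μ N 0 (a-1) k j hj
      rw [Matrix.mul_apply]
      simp_rw [hshift]
      rw [← Matrix.mul_apply, hMa', ← Matrix.mul_assoc,
        Matrix.mul_nonsing_inv _ hLa'_det, Matrix.one_mul]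
    rw [key1, Matrix.mul_apply]
    have hn1' : n - 1 < N := by omega
    rw [Fintype.sum_eq_single (⟨n-1, hn1'⟩ : Fin N) (fun k hk => ?_)]
    · rw [key2 _ _ (show ((⟨n-1,hn1'⟩ : Fin N):ℕ) + 1 < N by simp; omega)]
      have e2 : (⟨((⟨n-1,hn1'⟩ : Fin N):ℕ)+1, by simp; omega⟩ : Fin N) = ⟨n, hn⟩ :=
        Fin.ext (by simp; omega)
      rw [e2, hUa'_inv_diag, one_div_mul_eq_div]
    · rcases lt_or_gt_of_ne (Fin.val_ne_of_ne hk) with h | h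
      · have h' : (k:ℕ) < n - 1 := by simpa using h
        rw [key2 _ _ (show (k:ℕ) + 1 < N by omega),
          hUa'_inv_tri _ _ (Fin.lt_def.mpr (by simp; omega)), zero_mul]
      · have h' : n - 1 < (k:ℕ) := by simpa using h
        rw [hUa_tri _ _ (Fin.lt_def.mpr (by simp; omega)), mul_zero]
  · -- U part
    intro b hb1 hb2
    obtain ⟨hLb_tri, hLb_d, hUb_tri, hUb_det, hMb⟩ := hfact b 0 (Or.inl ⟨hb2, rfl⟩)
    obtain ⟨hLb'_tri, hLb'_d, hUb'_tri, hUb'_det, hMb'⟩ :=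
      hfact (b-1) 0 (Or.inl ⟨by omega, rfl⟩)
    obtain ⟨hLb_det, -, -, -⟩ := lowerInv _ hLb_tri hLb_d
    obtain ⟨hLb'_det, hLb'_inv_tri, hLb'_inv_diag, hLb'_inv_sub⟩ :=
      lowerInv _ hLb'_tri hLb'_d
    have key1 : (U b 0)⁻¹ * U (b-1) 0 = L b 0 * (MomC q p μ N b 0 * U (b-1) 0) := by
      rw [hMb, ← Matrix.mul_assoc, ← Matrix.mul_assoc,
        Matrix.mul_nonsing_inv _ hLb_det, Matrix.one_mul]
    have key2 : ∀ (i j : Fin N) (hi : (i:ℕ) + 1 < N),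
        (MomC q p μ N b 0 * U (b-1) 0) i j = (L (b-1) 0)⁻¹ ⟨(i:ℕ)+1, hi⟩ j := by
      intro i j hi
      have hb' : b - 1 + 1 = b := by omega
      have hshift : ∀ k : Fin N,
          MomC q p μ N b 0 i k = MomC q p μ N (b-1) 0 ⟨(i:ℕ)+1, hi⟩ k := by
        intro k
        conv_lhs => rw [← hb']
        exact momC_row_shift q p hq μ N (b-1) 0 i k hi
      rw [Matrix.mul_apply]
      simp_rw [hshift]
      rw [← Matrix.mul_apply, hMb', Matrix.mul_assoc,
        Matrix.nonsing_inv_mul _ hUb'_det, Matrix.mul_one]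
    constructor
    · intro hN
      rw [key1, Matrix.mul_apply]
      rw [Fintype.sum_eq_single (⟨0, by omega⟩ : Fin N) (fun k hk => ?_)]
      · rw [hLb_d, one_mul, key2 _ _ (show ((⟨0, by omega⟩ : Fin N):ℕ) + 1 < N by simpa)]
        have e2 : (⟨((⟨0, by omega⟩ : Fin N):ℕ)+1, by simpa⟩ : Fin N) = ⟨1, hN⟩ :=
          Fin.ext (by simp)
        rw [e2, hLb'_inv_sub 0 hN]
      · have h' : 0 < (k:ℕ) := by
          rcases Nat.eq_zero_or_pos (k:ℕ) with h | h
          · exact absurd (Fin.ext (by simpa using h)) hk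
          · exact h
        rw [hLb_tri _ _ (Fin.lt_def.mpr (by simpa using h')), zero_mul]
    · intro n hn1 hn2
      rw [key1, Matrix.mul_apply]
      rw [sumTwo _ (⟨n-1, by omega⟩ : Fin N) (⟨n, by omega⟩ : Fin N)
        (by simp [Fin.ext_iff]; omega) (fun k hk1 hk2 => ?_)]
      · have e1 : (⟨((⟨n-1, by omega⟩ : Fin N):ℕ)+1, by simp; omega⟩ : Fin N)
            = ⟨n, by omega⟩ := Fin.ext (by simp; omega)
        rw [key2 _ _ (show ((⟨n-1, by omega⟩ : Fin N):ℕ) + 1 < N by simp; omega), e1,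
          hLb'_inv_diag, mul_one, hLb_d, one_mul,
          key2 _ _ (show ((⟨n, by omega⟩ : Fin N):ℕ) + 1 < N by simp; omega)]
        have e3 : (⟨((⟨n, by omega⟩ : Fin N):ℕ)+1, by simp; omega⟩ : Fin N)
            = ⟨n+1, by omega⟩ := Fin.ext (by simp)
        rw [e3, hLb'_inv_sub n (by omega)]
        ring
      · rcases lt_trichotomy (k:ℕ) (n-1) with h | h | h
        · rw [key2 _ _ (show (k:ℕ) + 1 < N by omega),
            hLb'_inv_tri _ _ (Fin.lt_def.mpr (by simp; omega)), mul_zero]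
        · exact absurd (Fin.ext (by simpa using h)) hk1
        · rcases lt_or_eq_of_le (Nat.succ_le_of_lt h) with h2 | h2
          · rw [hLb_tri _ _ (Fin.lt_def.mpr (by simp; omega)), zero_mul]
          · exact absurd (Fin.ext (show (k:ℕ) = n by omega)) hk2
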